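/- Let γ ∈ (0,1), let T̄ : C(Z) → C(Z) be a γ-contraction in the sup norm with unique fixed point Q* ∈ C(Z), and let q* ∈ C(Z) be the unique fixed point of the smoothed operator K_μ ∘ T̄. Suppose Q* is α-Hölder for some α ∈ (0,1]: there exists L_Q < ∞ with |Q*(z) − Q*(u)| ≤ L_Q · 𝖽(z,u)^α for all z,u ∈ Z. Then ‖Q* − q*‖ ≤ (1/(1−γ)) ‖Q* − K_μ[Q*]‖ ≤ (L_Q/(1−γ)) · ξ_μ, where ξ_μ := sup_{z∈Z} (∫_Z 𝖽(z,u)^α κ(z,u) μ(du)) / (∫_Z κ(z,u) μ(du)). -/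

import Mathlib

open MeasureTheory

/-- approximation error of the smoothed fixed point: if `Q*` is the
fixed point of the `γ`-contraction `T̄`, `q*` is the fixed point of `K_μ ∘ T̄`, and
`Q*` is `α`-Hölder with constant `L_Q`, then
`‖Q* − q*‖ ≤ (1/(1−γ))‖Q* − K_μ[Q*]‖ ≤ (L_Q/(1−γ)) ξ_μ` where
`ξ_μ = sup_z (∫ 𝖽(z,u)^α κ(z,u) μ(du)) / (∫ κ(z,u) μ(du))`. -/
theorem smoothed_fixed_point_approximation_error
    {Z : Type*} [MetricSpace Z] [CompactSpace Z] [Nonempty Z]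
    [MeasurableSpace Z] [BorelSpace Z]
    (κ : Z → Z → ℝ) (hκcont : Continuous fun p : Z × Z => κ p.1 p.2)
    (κmin : ℝ) (hκmin : 0 < κmin) (hκlb : ∀ z u, κmin ≤ κ z u)
    (μ : Measure Z) [IsProbabilityMeasure μ]
    (γ : ℝ) (hγ0 : 0 < γ) (hγ1 : γ < 1)
    (T : C(Z, ℝ) → C(Z, ℝ))
    (hT : ∀ q q' : C(Z, ℝ), ‖T q - T q'‖ ≤ γ * ‖q - q'‖)
    (K : C(Z, ℝ) → C(Z, ℝ))
    (hK : ∀ (q : C(Z, ℝ)) (z : Z),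
      K q z = (∫ u, κ z u * q u ∂μ) / ∫ u, κ z u ∂μ)
    (Qstar : C(Z, ℝ)) (hQfix : T Qstar = Qstar)
    (qstar : C(Z, ℝ)) (hqfix : K (T qstar) = qstar)
    (α : ℝ) (hα0 : 0 < α) (hα1 : α ≤ 1)
    (LQ : ℝ) (hHolder : ∀ z u : Z, |Qstar z - Qstar u| ≤ LQ * dist z u ^ α) :
    ‖Qstar - qstar‖ ≤ (1 / (1 - γ)) * ‖Qstar - K Qstar‖ ∧
      (1 / (1 - γ)) * ‖Qstar - K Qstar‖ ≤ (LQ / (1 - γ)) *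
        ⨆ z : Z, (∫ u, dist z u ^ α * κ z u ∂μ) / ∫ u, κ z u ∂μ := by
  have hγ' : (0:ℝ) < 1 - γ := by linarith
  -- integrability of continuous functions
  have hinteg : ∀ f : Z → ℝ, Continuous f → Integrable f μ := by
    intro f hf
    have := (hf.continuousOn.integrableOn_compact isCompact_univ (μ := μ))
    simpa [integrableOn_univ] using this
  have hκz : ∀ z : Z, Continuous (fun u => κ z u) :=
    fun z => hκcont.comp (continuous_const.prodMk continuous_id)
  have hκi : ∀ z : Z, Integrable (fun u => κ z u) μ := fun z => hinteg _ (hκz z)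
  have hκnn : ∀ z u : Z, (0:ℝ) ≤ κ z u := fun z u => le_trans hκmin.le (hκlb z u)
  have hIpos : ∀ z : Z, (0:ℝ) < ∫ u, κ z u ∂μ := by
    intro z
    have h1 : κmin ≤ ∫ u, κ z u ∂μ := by
      have := integral_mono (integrable_const κmin) (hκi z) (fun u => hκlb z u)
      simpa using this
    linarith
  have hdistc : ∀ z : Z, Continuous (fun u => dist z u ^ α) := by
    intro z
    exact (continuous_const.dist continuous_id).rpow_const (fun x => Or.inr hα0.le)
  -- non-expansiveness of K
  have hKne : ∀ p p' : C(Z, ℝ), ‖K p - K p'‖ ≤ ‖p - p'‖ := by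
    intro p p'
    apply ContinuousMap.norm_le _ (norm_nonneg _) |>.mpr
    intro z
    have hip : Integrable (fun u => κ z u * p u) μ :=
      hinteg _ ((hκz z).mul p.continuous)
    have hip' : Integrable (fun u => κ z u * p' u) μ :=
      hinteg _ ((hκz z).mul p'.continuous)
    have hval : (K p - K p') z =
        (∫ u, κ z u * (p u - p' u) ∂μ) / ∫ u, κ z u ∂μ := by
      have : (∫ u, κ z u * (p u - p' u) ∂μ)
          = (∫ u, κ z u * p u ∂μ) - ∫ u, κ z u * p' u ∂μ := by
        rw [← integral_sub hip hip']
        congr 1; ext u; ring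
      simp [ContinuousMap.sub_apply, hK, this, sub_div]
    rw [hval, Real.norm_eq_abs, abs_div, abs_of_pos (hIpos z), div_le_iff₀ (hIpos z)]
    calc |∫ u, κ z u * (p u - p' u) ∂μ| ≤ ∫ u, |κ z u * (p u - p' u)| ∂μ :=
          by
          simpa only [Real.norm_eq_abs] using norm_integral_le_integral_norm (μ := μ) (fun u => κ z u * (p u - p' u))
      _ ≤ ∫ u, κ z u * ‖p - p'‖ ∂μ := by
          apply integral_mono (hinteg _ (((hκz z).mul (p.continuous.sub p'.continuous)).abs))
            (hinteg _ ((hκz z).mul continuous_const))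
          intro u
          dsimp only [Pi.mul_apply, Pi.sub_apply]
          rw [abs_mul, abs_of_nonneg (hκnn z u)]
          have : |p u - p' u| ≤ ‖p - p'‖ := by
            have := (p - p').norm_coe_le_norm u
            simpa [ContinuousMap.sub_apply] using this
          exact mul_le_mul_of_nonneg_left this (hκnn z u)
      _ = ‖p - p'‖ * ∫ u, κ z u ∂μ := by rw [integral_mul_const]; ring
  -- first inequality
  have hfirst : ‖Qstar - qstar‖ ≤ (1 / (1 - γ)) * ‖Qstar - K Qstar‖ := by
    have h1 : ‖Qstar - qstar‖ ≤ ‖Qstar - K Qstar‖ + ‖K Qstar - qstar‖ := by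
      have := norm_add_le (Qstar - K Qstar) (K Qstar - qstar)
      simpa [sub_add_sub_cancel] using this
    have h2 : ‖K Qstar - qstar‖ ≤ γ * ‖Qstar - qstar‖ := by
      calc ‖K Qstar - qstar‖ = ‖K (T Qstar) - K (T qstar)‖ := by rw [hQfix, hqfix]
        _ ≤ ‖T Qstar - T qstar‖ := hKne _ _
        _ ≤ γ * ‖Qstar - qstar‖ := hT _ _
    rw [one_div, inv_mul_eq_div, le_div_iff₀ hγ']
    nlinarith [norm_nonneg (Qstar - qstar)]
  refine ⟨hfirst, ?_⟩
  -- ratio function and its properties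
  set r : Z → ℝ := fun z => (∫ u, dist z u ^ α * κ z u ∂μ) / ∫ u, κ z u ∂μ with hr
  have hrnn : ∀ z, 0 ≤ r z := by
    intro z
    apply div_nonneg _ (hIpos z).le
    apply integral_nonneg
    intro u
    exact mul_nonneg (Real.rpow_nonneg dist_nonneg α) (hκnn z u)
  have hbdd : BddAbove (Set.range r) := by
    refine ⟨Metric.diam (Set.univ : Set Z) ^ α, ?_⟩
    rintro x ⟨z, rfl⟩
    rw [hr]
    rw [div_le_iff₀ (hIpos z)]
    calc (∫ u, dist z u ^ α * κ z u ∂μ)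
        ≤ ∫ u, Metric.diam (Set.univ : Set Z) ^ α * κ z u ∂μ := by
          apply integral_mono (hinteg _ ((hdistc z).mul (hκz z)))
            (hinteg _ (continuous_const.mul (hκz z)))
          intro u
          apply mul_le_mul_of_nonneg_right _ (hκnn z u)
          exact Real.rpow_le_rpow dist_nonneg
            (Metric.dist_le_diam_of_mem Metric.isBounded_of_compactSpace trivial trivial) hα0.le
      _ = Metric.diam (Set.univ : Set Z) ^ α * ∫ u, κ z u ∂μ := integral_const_mul _ _
  have hξnn : 0 ≤ ⨆ z : Z, r z := le_ciSup_of_le hbdd (Classical.arbitrary Z) (hrnn _)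
  -- key bound : ‖Qstar - K Qstar‖ ≤ LQ * ⨆ z, r z
  have hkey : ‖Qstar - K Qstar‖ ≤ LQ * ⨆ z : Z, r z := by
    rcases le_or_gt 0 LQ with hLQ | hLQ
    · apply ContinuousMap.norm_le _ (mul_nonneg hLQ hξnn) |>.mpr
      intro z
      have hiq : Integrable (fun u => κ z u * Qstar u) μ :=
        hinteg _ ((hκz z).mul Qstar.continuous)
      have hval : (Qstar - K Qstar) z =
          (∫ u, κ z u * (Qstar z - Qstar u) ∂μ) / ∫ u, κ z u ∂μ := by
        have h1 : (∫ u, κ z u * (Qstar z - Qstar u) ∂μ)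
            = Qstar z * (∫ u, κ z u ∂μ) - ∫ u, κ z u * Qstar u ∂μ := by
          have : (∫ u, κ z u * (Qstar z - Qstar u) ∂μ)
              = (∫ u, κ z u * Qstar z ∂μ) - ∫ u, κ z u * Qstar u ∂μ := by
            rw [← integral_sub (hinteg (fun u => κ z u * Qstar z) ((hκz z).mul continuous_const)) hiq]
            congr 1; ext u; ring
          rw [this, integral_mul_const]; ring
        rw [ContinuousMap.sub_apply, hK, h1, sub_div, mul_div_assoc,
          div_self (hIpos z).ne', mul_one]
      have hzb : ‖(Qstar - K Qstar) z‖ ≤ LQ * r z := by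
        have hrz : LQ * r z * (∫ u, κ z u ∂μ) = LQ * ∫ u, dist z u ^ α * κ z u ∂μ := by
          simp only [hr]
          field_simp [(hIpos z).ne']
        rw [hval, Real.norm_eq_abs, abs_div, abs_of_pos (hIpos z),
          div_le_iff₀ (hIpos z), hrz]
        calc |∫ u, κ z u * (Qstar z - Qstar u) ∂μ|
            ≤ ∫ u, |κ z u * (Qstar z - Qstar u)| ∂μ := by
              simpa only [Real.norm_eq_abs] using
                norm_integral_le_integral_norm (μ := μ) (fun u => κ z u * (Qstar z - Qstar u))
          _ ≤ ∫ u, LQ * (dist z u ^ α * κ z u) ∂μ := by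
              apply integral_mono
                (hinteg _ (((hκz z).mul (continuous_const.sub Qstar.continuous)).abs))
                (hinteg _ (continuous_const.mul ((hdistc z).mul (hκz z))))
              intro u
              dsimp only [Pi.mul_apply, Pi.sub_apply]
              rw [abs_mul, abs_of_nonneg (hκnn z u)]
              calc κ z u * |Qstar z - Qstar u| ≤ κ z u * (LQ * dist z u ^ α) :=
                    mul_le_mul_of_nonneg_left (hHolder z u) (hκnn z u)
                _ = LQ * (dist z u ^ α * κ z u) := by ring
          _ = LQ * ∫ u, dist z u ^ α * κ z u ∂μ := integral_const_mul _ _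
      exact hzb.trans (mul_le_mul_of_nonneg_left (le_ciSup hbdd z) hLQ)
    · -- LQ < 0 : then Z is a subsingleton
      have hsub : ∀ z u : Z, z = u := by
        intro z u
        by_contra hne
        have hd : 0 < dist z u := dist_pos.mpr hne
        have hp : 0 < dist z u ^ α := Real.rpow_pos_of_pos hd α
        have := hHolder z u
        nlinarith [abs_nonneg (Qstar z - Qstar u)]
      have hQconst : ∀ z u : Z, Qstar u = Qstar z := fun z u => by rw [hsub z u]
      have hQK : Qstar - K Qstar = 0 := by
        ext z
        have h1 : (∫ u, κ z u * Qstar u ∂μ) = (∫ u, κ z u ∂μ) * Qstar z := by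
          rw [← integral_mul_const]
          congr 1; ext u; rw [hQconst z u]
        simp [ContinuousMap.sub_apply, hK, h1, mul_div_assoc,
          mul_comm, mul_div_cancel_left₀ _ (hIpos z).ne']
      have hr0 : ∀ z, r z = 0 := by
        intro z
        have : (∫ u, dist z u ^ α * κ z u ∂μ) = 0 := by
          have : (fun u => dist z u ^ α * κ z u) = fun u => 0 := by
            ext u
            rw [← hsub z u]
            simp [Real.zero_rpow hα0.ne']
          rw [this, integral_zero]
        simp [hr, this]
      have : (⨆ z : Z, r z) = 0 := by
        have := hr0 (Classical.arbitrary Z)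
        calc (⨆ z : Z, r z) = ⨆ _ : Z, (0:ℝ) := by congr 1; ext z; exact hr0 z
          _ = 0 := ciSup_const
      rw [hQK, this, norm_zero, mul_zero]
  calc (1 / (1 - γ)) * ‖Qstar - K Qstar‖
      ≤ (1 / (1 - γ)) * (LQ * ⨆ z : Z, r z) :=
        mul_le_mul_of_nonneg_left hkey (by positivity)
    _ = (LQ / (1 - γ)) * ⨆ z : Z, r z := by ring
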